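/- GNC truncated-least-squares weight update, intermediate case: let μ > 0, c > 0 and (μ/(μ+1))·c² < r < ((μ+1)/μ)·c². Set w* = c·√(μ(μ+1)/r) − μ. Then w* ∈ (0,1), the function f(w) = w·r + μ(1−w)c²/(μ+w) on [0,1] attains its minimum at w*, and the minimum value is f(w*) = 2c·√(μ(μ+1)·r) − μ(r + c²). -/

import Mathlib

/-- GNC truncated-least-squares weight update, intermediate case: if
`(μ/(μ+1))·c² < r < ((μ+1)/μ)·c²`, then `w* = c·√(μ(μ+1)/r) − μ` lies in `(0,1)`,
the function `f(w) = w·r + μ(1−w)c²/(μ+w)` attains its minimum on `[0,1]` at `w*`,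
and the minimum value is `2c·√(μ(μ+1)·r) − μ(r + c²)`. -/
theorem gnc_tls_intermediate_case (μ c r : ℝ) (hμ : 0 < μ) (hc : 0 < c)
    (hr₁ : (μ / (μ + 1)) * c ^ 2 < r) (hr₂ : r < ((μ + 1) / μ) * c ^ 2) :
    (c * Real.sqrt (μ * (μ + 1) / r) - μ) ∈ Set.Ioo (0 : ℝ) 1 ∧
    (∀ w ∈ Set.Icc (0 : ℝ) 1,
      (c * Real.sqrt (μ * (μ + 1) / r) - μ) * r +
          μ * (1 - (c * Real.sqrt (μ * (μ + 1) / r) - μ)) * c ^ 2 /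
            (μ + (c * Real.sqrt (μ * (μ + 1) / r) - μ)) ≤
        w * r + μ * (1 - w) * c ^ 2 / (μ + w)) ∧
    (c * Real.sqrt (μ * (μ + 1) / r) - μ) * r +
        μ * (1 - (c * Real.sqrt (μ * (μ + 1) / r) - μ)) * c ^ 2 /
          (μ + (c * Real.sqrt (μ * (μ + 1) / r) - μ)) =
      2 * c * Real.sqrt (μ * (μ + 1) * r) - μ * (r + c ^ 2) := by
  have hμ1 : (0:ℝ) < μ + 1 := by linarith
  have hr0 : 0 < r := lt_trans (by positivity) hr₁
  set s := Real.sqrt (μ * (μ + 1) / r) with hs_def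
  have hs0 : 0 ≤ s := Real.sqrt_nonneg _
  have hs2 : s ^ 2 = μ * (μ + 1) / r := Real.sq_sqrt (by positivity)
  have hs2' : s ^ 2 * r = μ * (μ + 1) := by rw [hs2]; field_simp
  -- bounds on c*s
  have hA : μ * r < (μ + 1) * c ^ 2 := by
    rw [div_mul_eq_mul_div, lt_div_iff₀ hμ] at hr₂; linarith
  have hB : μ * c ^ 2 < (μ + 1) * r := by
    rw [div_mul_eq_mul_div, div_lt_iff₀ hμ1] at hr₁; linarith
  have hcsq : (c * s) ^ 2 * r = c ^ 2 * (μ * (μ + 1)) := by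
    have : (c * s) ^ 2 * r = c ^ 2 * (s ^ 2 * r) := by ring
    rw [this, hs2']
  have hsq1 : μ ^ 2 < (c * s) ^ 2 := by nlinarith [hcsq, hA, hμ, hr0]
  have hsq2 : (c * s) ^ 2 < (μ + 1) ^ 2 := by nlinarith [hcsq, hB, hμ1, hr0]
  have hcs1 : μ < c * s := by nlinarith [hsq1, mul_nonneg hc.le hs0]
  have hcs2 : c * s < μ + 1 := by nlinarith [hsq2, mul_nonneg hc.le hs0]
  have hcs0 : 0 < c * s := lt_trans hμ hcs1
  -- sqrt identity
  have hsr : Real.sqrt (μ * (μ + 1) * r) = s * r := by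
    have h : μ * (μ + 1) * r = (s * r) ^ 2 := by
      have : (s * r) ^ 2 = s ^ 2 * r * r := by ring
      rw [this, hs2']
    rw [h, Real.sqrt_sq (by positivity)]
  -- equality part
  have heq : (c * s - μ) * r + μ * (1 - (c * s - μ)) * c ^ 2 / (μ + (c * s - μ)) =
      2 * c * s * r - μ * r - μ * c ^ 2 := by
    have h1 : μ + (c * s - μ) = c * s := by ring
    rw [h1]
    have hsne : s ≠ 0 := fun h => by simp [h] at hcs0
    field_simp
    linear_combination (-c) * hs2'
  refine ⟨⟨by linarith, by linarith⟩, ?_, ?_⟩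
  · intro w hw
    have ht : 0 < μ + w := by linarith [hw.1]
    rw [heq, ← sub_nonneg]
    have expand : w * r + μ * (1 - w) * c ^ 2 / (μ + w) - (2 * c * s * r - μ * r - μ * c ^ 2) =
        r * ((μ + w) - c * s) ^ 2 / (μ + w) := by
      field_simp
      nlinarith [hs2']
    rw [expand]; positivity
  · rw [heq, hsr]; ring
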